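/- Let Ω ⊂ ℝ^N be bounded open, s ∈ (0,1), ε₀ ∈ (0, 1-s). Then for all u ∈ H^{s+ε₀}(Ω) and v ∈ H^s(Ω), ∬_{Ω×Ω} |u(x)-u(y)| |v(x)-v(y)| |log|x-y|| / |x-y|^{N+2s} dx dy ≤ (1/(e ε₀)) ( |u|²_{H^{s+ε₀}(Ω)} + d_Ω^{2ε₀} |u|²_{H^s(Ω)} )^{1/2} |v|_{H^s(Ω)}. -/

import Mathlib

open scoped ENNReal
open MeasureTheory

noncomputable def gagliardo8 (N : ℕ) (Ω : Set (EuclideanSpace ℝ (Fin N))) (t : ℝ)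
    (u : EuclideanSpace ℝ (Fin N) → ℝ) : ℝ≥0∞ :=
  ∫⁻ x in Ω, ∫⁻ y in Ω, ENNReal.ofReal ((u x - u y) ^ 2 / ‖x - y‖ ^ ((N : ℝ) + 2 * t))

lemma log_le_div_e {r : ℝ} (hr : 0 < r) : Real.log r ≤ r / Real.exp 1 := by
  have h := Real.log_le_sub_one_of_pos (x := r / Real.exp 1) (by positivity)
  rw [Real.log_div (ne_of_gt hr) (by positivity), Real.log_exp] at h
  linarith

lemma log_sq_le {ε₀ : ℝ} (hε : 0 < ε₀) {t : ℝ} (ht : 0 < t) :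
    (Real.log t) ^ 2 ≤ (1 / (Real.exp 1 * ε₀)) ^ 2 * (t ^ (-(2 * ε₀)) + t ^ (2 * ε₀)) := by
  have he : (0:ℝ) < Real.exp 1 := Real.exp_pos 1
  have key : ∀ r : ℝ, 0 < r → 1 ≤ r → (Real.log r) ^ 2 ≤ (1 / (Real.exp 1 * ε₀))^2 * r ^ (2*ε₀) := by
    intro r hr hr1
    have h1 : Real.log r = (1/ε₀) * Real.log (r ^ ε₀) := by
      rw [Real.log_rpow hr]; field_simp
    have h2 : Real.log (r ^ ε₀) ≤ r ^ ε₀ / Real.exp 1 := log_le_div_e (Real.rpow_pos_of_pos hr _)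
    have h3 : 0 ≤ Real.log r := Real.log_nonneg hr1
    have h4 : Real.log r ≤ (1/(Real.exp 1 * ε₀)) * r ^ ε₀ := by
      rw [h1]
      calc (1/ε₀) * Real.log (r ^ ε₀) ≤ (1/ε₀) * (r ^ ε₀ / Real.exp 1) := by
            apply mul_le_mul_of_nonneg_left h2 (by positivity)
        _ = (1/(Real.exp 1 * ε₀)) * r ^ ε₀ := by simp only [one_div, mul_inv]; ring
    have h5 : (Real.log r)^2 ≤ ((1/(Real.exp 1 * ε₀)) * r ^ ε₀)^2 := by
      apply sq_le_sq' _ h4; nlinarith [Real.rpow_pos_of_pos hr ε₀, mul_pos he hε]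
    calc (Real.log r)^2 ≤ ((1/(Real.exp 1 * ε₀)) * r ^ ε₀)^2 := h5
      _ = (1/(Real.exp 1 * ε₀))^2 * (r ^ ε₀)^2 := by ring
      _ = (1/(Real.exp 1 * ε₀))^2 * r ^ (2*ε₀) := by
          rw [show (2:ℝ)*ε₀ = ε₀*2 by ring, Real.rpow_mul hr.le, Real.rpow_two]
  rcases le_or_gt 1 t with h | h
  · have := key t ht h
    have hpos : 0 ≤ t ^ (-(2*ε₀)) := (Real.rpow_pos_of_pos ht _).le
    nlinarith [sq_nonneg (1/(Real.exp 1 * ε₀))]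
  · have hinv : 1 ≤ t⁻¹ := (one_le_inv_iff₀.mpr ⟨ht, h.le⟩)
    have key2 := key t⁻¹ (by positivity) hinv
    rw [Real.log_inv, Real.inv_rpow ht.le, neg_sq] at key2
    rw [Real.rpow_neg ht.le]
    have hpos : 0 ≤ t ^ (2*ε₀) := (Real.rpow_pos_of_pos ht _).le
    nlinarith [sq_nonneg (1/(Real.exp 1 * ε₀))]

-- pointwise splitting of the integrand (Cauchy-Schwarz factors)
lemma pt_split {N2s h : ℝ} (hh : 0 < h) (hsum : h + h = N2s) (a b L t : ℝ)
    (ha : 0 ≤ a) (hb : 0 ≤ b) (ht : 0 ≤ t) :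
    ENNReal.ofReal (a * b * |L| / t ^ N2s) ≤
      ENNReal.ofReal (a * |L| / t ^ h) * ENNReal.ofReal (b / t ^ h) := by
  rcases eq_or_lt_of_le ht with rfl | ht
  · have h0 : (0:ℝ) ^ N2s = 0 := Real.zero_rpow (by linarith)
    simp [h0]
  · rw [← ENNReal.ofReal_mul (by positivity)]
    apply ENNReal.ofReal_le_ofReal
    have hth : (0:ℝ) < t ^ h := Real.rpow_pos_of_pos ht _
    rw [div_mul_div_comm, ← Real.rpow_add ht, hsum]
    exact le_of_eq (by ring)

-- squaring an ofReal with rpow 2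
lemma pt_sq {r : ℝ} (hr : 0 ≤ r) : (ENNReal.ofReal r) ^ (2:ℝ) = ENNReal.ofReal (r ^ 2) := by
  rw [ENNReal.ofReal_rpow_of_nonneg hr (by norm_num), Real.rpow_two]

-- G squared identity
lemma rpow_hh {N2s h t : ℝ} (ht : 0 < t) (hsum : h + h = N2s) :
    (t ^ h) ^ 2 = t ^ N2s := by
  rw [sq, ← Real.rpow_add ht, hsum]

lemma pt_G {N2s h : ℝ} (hh : 0 < h) (hsum : h + h = N2s) (b t : ℝ) (ht : 0 ≤ t) :
    (ENNReal.ofReal (|b| / t ^ h)) ^ (2:ℝ) = ENNReal.ofReal (b ^ 2 / t ^ N2s) := by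
  rcases eq_or_lt_of_le ht with rfl | ht
  · rw [Real.zero_rpow hh.ne', Real.zero_rpow (by linarith : N2s ≠ 0)]
    simp
  · rw [pt_sq (by positivity)]
    congr 1
    rw [div_pow, sq_abs, rpow_hh ht hsum]

-- F squared bound (real inequality)
lemma pt_F {ε₀ N2s h d : ℝ} (hε : 0 < ε₀) (hh : 0 < h) (hsum : h + h = N2s)
    {t : ℝ} (ht : 0 < t) (htd : t ≤ d) (A : ℝ) :
    (|A| * |Real.log t| / t ^ h) ^ 2 ≤
      (1 / (Real.exp 1 * ε₀)) ^ 2 *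
        (A ^ 2 / t ^ (N2s + 2 * ε₀) + d ^ (2 * ε₀) * (A ^ 2 / t ^ N2s)) := by
  set c : ℝ := 1 / (Real.exp 1 * ε₀) with hc
  have hP : (0:ℝ) < t ^ N2s := Real.rpow_pos_of_pos ht _
  have hQ : (0:ℝ) < t ^ (2*ε₀) := Real.rpow_pos_of_pos ht _
  have hlog : (Real.log t) ^ 2 ≤ c ^ 2 * ((t ^ (2*ε₀))⁻¹ + t ^ (2*ε₀)) := by
    have := log_sq_le hε ht
    rwa [Real.rpow_neg ht.le] at this
  have hQd : t ^ (2*ε₀) ≤ d ^ (2*ε₀) :=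
    Real.rpow_le_rpow ht.le htd (by positivity)
  have hPQ : t ^ (N2s + 2*ε₀) = t ^ N2s * t ^ (2*ε₀) := Real.rpow_add ht _ _
  have hLHS : (|A| * |Real.log t| / t ^ h) ^ 2 = (A^2 / t ^ N2s) * (Real.log t)^2 := by
    rw [div_pow, mul_pow, sq_abs, sq_abs, rpow_hh ht hsum]
    ring
  rw [hLHS]
  calc (A^2 / t ^ N2s) * (Real.log t)^2
      ≤ (A^2 / t ^ N2s) * (c ^ 2 * ((t ^ (2*ε₀))⁻¹ + t ^ (2*ε₀))) := by
        apply mul_le_mul_of_nonneg_left hlog (by positivity)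
    _ = c ^ 2 * (A^2 / t ^ (N2s + 2*ε₀) + (A^2 / t ^ N2s) * t ^ (2*ε₀)) := by
        rw [hPQ]; field_simp
    _ ≤ c ^ 2 * (A^2 / t ^ (N2s + 2*ε₀) + (A^2 / t ^ N2s) * d ^ (2*ε₀)) := by
        gcongr
    _ = c ^ 2 * (A ^ 2 / t ^ (N2s + 2 * ε₀) + d ^ (2 * ε₀) * (A ^ 2 / t ^ N2s)) := by ring

theorem stmt8 (N : ℕ) (Ω : Set (EuclideanSpace ℝ (Fin N))) (hΩo : IsOpen Ω)
    (hΩb : Bornology.IsBounded Ω) (s ε₀ : ℝ) (hs : s ∈ Set.Ioo (0 : ℝ) 1)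
    (hε₀ : ε₀ ∈ Set.Ioo (0 : ℝ) (1 - s))
    (u v : EuclideanSpace ℝ (Fin N) → ℝ) (hu : Measurable u) (hv : Measurable v)
    (huH : gagliardo8 N Ω (s + ε₀) u ≠ ⊤) (huH' : gagliardo8 N Ω s u ≠ ⊤)
    (hvH : gagliardo8 N Ω s v ≠ ⊤) :
    (∫⁻ x in Ω, ∫⁻ y in Ω, ENNReal.ofReal
        (|u x - u y| * |v x - v y| * |Real.log ‖x - y‖| / ‖x - y‖ ^ ((N : ℝ) + 2 * s))) ≤
      ENNReal.ofReal (1 / (Real.exp 1 * ε₀)) *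
        (gagliardo8 N Ω (s + ε₀) u +
            ENNReal.ofReal ((Metric.diam Ω) ^ (2 * ε₀)) * gagliardo8 N Ω s u) ^ ((1 : ℝ) / 2) *
        (gagliardo8 N Ω s v) ^ ((1 : ℝ) / 2) := by
  obtain ⟨hs0, hs1⟩ := hs
  obtain ⟨hε0, hε1⟩ := hε₀
  set μ : Measure (EuclideanSpace ℝ (Fin N)) := volume.restrict Ω with hμ
  set π : Measure ((EuclideanSpace ℝ (Fin N)) × (EuclideanSpace ℝ (Fin N))) := μ.prod μ with hπ
  have hΩm : MeasurableSet Ω := hΩo.measurableSet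
  set h : ℝ := ((N:ℝ) + 2*s)/2 with hhdef
  have hh : 0 < h := by positivity
  have hsum : h + h = (N:ℝ) + 2*s := by rw [hhdef]; ring
  set c : ℝ := 1/(Real.exp 1 * ε₀) with hcdef
  have hc : 0 < c := by positivity
  set d : ℝ := Metric.diam Ω with hddef
  -- measurability
  have mT : Measurable (fun p : (EuclideanSpace ℝ (Fin N)) × (EuclideanSpace ℝ (Fin N)) => ‖p.1 - p.2‖) := (measurable_fst.sub measurable_snd).norm
  have mU : Measurable (fun p : (EuclideanSpace ℝ (Fin N)) × (EuclideanSpace ℝ (Fin N)) => u p.1 - u p.2) :=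
    (hu.comp measurable_fst).sub (hu.comp measurable_snd)
  have mV : Measurable (fun p : (EuclideanSpace ℝ (Fin N)) × (EuclideanSpace ℝ (Fin N)) => v p.1 - v p.2) :=
    (hv.comp measurable_fst).sub (hv.comp measurable_snd)
  set F : (EuclideanSpace ℝ (Fin N)) × (EuclideanSpace ℝ (Fin N)) → ℝ≥0∞ := fun p =>
    ENNReal.ofReal (|u p.1 - u p.2| * |Real.log ‖p.1 - p.2‖| / ‖p.1 - p.2‖ ^ h) with hF
  set G : (EuclideanSpace ℝ (Fin N)) × (EuclideanSpace ℝ (Fin N)) → ℝ≥0∞ := fun p =>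
    ENNReal.ofReal (|v p.1 - v p.2| / ‖p.1 - p.2‖ ^ h) with hG
  have mTh : Measurable (fun p : (EuclideanSpace ℝ (Fin N)) × (EuclideanSpace ℝ (Fin N)) => ‖p.1 - p.2‖ ^ h) := by fun_prop
  have mTs : Measurable (fun p : (EuclideanSpace ℝ (Fin N)) × (EuclideanSpace ℝ (Fin N)) => ‖p.1 - p.2‖ ^ ((N:ℝ) + 2*s)) := by fun_prop
  have mTse : Measurable (fun p : (EuclideanSpace ℝ (Fin N)) × (EuclideanSpace ℝ (Fin N)) => ‖p.1 - p.2‖ ^ ((N:ℝ) + 2*(s+ε₀))) := by fun_prop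
  have mF : Measurable F := ((mU.abs.mul mT.log.abs).div mTh).ennreal_ofReal
  have mG : Measurable G := (mV.abs.div mTh).ennreal_ofReal
  set I : (EuclideanSpace ℝ (Fin N)) × (EuclideanSpace ℝ (Fin N)) → ℝ≥0∞ := fun p =>
    ENNReal.ofReal (|u p.1 - u p.2| * |v p.1 - v p.2| * |Real.log ‖p.1 - p.2‖| /
      ‖p.1 - p.2‖ ^ ((N:ℝ) + 2*s)) with hI
  have mI : Measurable I := (((mU.abs.mul mV.abs).mul mT.log.abs).div mTs).ennreal_ofReal
  -- the two gagliardo-type integrands on the product space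
  set f1 : (EuclideanSpace ℝ (Fin N)) × (EuclideanSpace ℝ (Fin N)) → ℝ≥0∞ := fun p =>
    ENNReal.ofReal ((u p.1 - u p.2)^2 / ‖p.1 - p.2‖ ^ ((N:ℝ) + 2*(s+ε₀))) with hf1
  set f2 : (EuclideanSpace ℝ (Fin N)) × (EuclideanSpace ℝ (Fin N)) → ℝ≥0∞ := fun p =>
    ENNReal.ofReal ((u p.1 - u p.2)^2 / ‖p.1 - p.2‖ ^ ((N:ℝ) + 2*s)) with hf2
  set g2 : (EuclideanSpace ℝ (Fin N)) × (EuclideanSpace ℝ (Fin N)) → ℝ≥0∞ := fun p =>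
    ENNReal.ofReal ((v p.1 - v p.2)^2 / ‖p.1 - p.2‖ ^ ((N:ℝ) + 2*s)) with hg2
  have mf1 : Measurable f1 := ((mU.pow_const 2).div mTse).ennreal_ofReal
  have mf2 : Measurable f2 := ((mU.pow_const 2).div mTs).ennreal_ofReal
  have mg2 : Measurable g2 := ((mV.pow_const 2).div mTs).ennreal_ofReal
  -- rewrite LHS as a product integral
  have hLHS : (∫⁻ x in Ω, ∫⁻ y in Ω, ENNReal.ofReal
      (|u x - u y| * |v x - v y| * |Real.log ‖x - y‖| / ‖x - y‖ ^ ((N : ℝ) + 2 * s)))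
      = ∫⁻ p, I p ∂π := (lintegral_prod I mI.aemeasurable).symm
  -- step 1: pointwise splitting
  have step1 : ∫⁻ p, I p ∂π ≤ ∫⁻ p, F p * G p ∂π := by
    apply lintegral_mono
    intro p
    exact pt_split hh hsum _ _ _ _ (abs_nonneg _) (abs_nonneg _) (norm_nonneg _)
  -- step 2 : Hölder
  have hconj : Real.HolderConjugate 2 2 := Real.HolderConjugate.two_two
  have step2 : ∫⁻ p, F p * G p ∂π ≤
      (∫⁻ p, F p ^ (2:ℝ) ∂π) ^ ((1:ℝ)/2) * (∫⁻ p, G p ^ (2:ℝ) ∂π) ^ ((1:ℝ)/2) := by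
    simpa using ENNReal.lintegral_mul_le_Lp_mul_Lq π hconj mF.aemeasurable mG.aemeasurable
  -- G squared integral
  have stepG : ∫⁻ p, G p ^ (2:ℝ) ∂π = gagliardo8 N Ω s v := by
    have hGeq : ∀ p : (EuclideanSpace ℝ (Fin N)) × (EuclideanSpace ℝ (Fin N)), G p ^ (2:ℝ) = g2 p := fun p =>
      pt_G hh hsum _ _ (norm_nonneg _)
    calc ∫⁻ p, G p ^ (2:ℝ) ∂π = ∫⁻ p, g2 p ∂π := by simp only [hGeq]
      _ = ∫⁻ x in Ω, ∫⁻ y in Ω, g2 (x, y) := lintegral_prod g2 mg2.aemeasurable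
      _ = gagliardo8 N Ω s v := rfl
  -- F squared integral bound
  have hae : ∀ᵐ p ∂π, p ∈ Ω ×ˢ Ω := by
    rw [hπ, hμ, Measure.prod_restrict]
    exact ae_restrict_mem (hΩm.prod hΩm)
  have haeF : ∀ᵐ p ∂π, F p ^ (2:ℝ) ≤
      ENNReal.ofReal (c^2) * (f1 p + ENNReal.ofReal (d ^ (2*ε₀)) * f2 p) := by
    filter_upwards [hae] with p hp
    obtain ⟨hp1, hp2⟩ := hp
    set t : ℝ := ‖p.1 - p.2‖ with htdef
    have ht0 : 0 ≤ t := norm_nonneg _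
    rcases eq_or_lt_of_le ht0 with hteq | htpos
    · have : F p = 0 := by
        rw [hF]
        simp only [← htdef, ← hteq, Real.log_zero, abs_zero, mul_zero, zero_div,
          ENNReal.ofReal_zero]
      rw [this, ENNReal.zero_rpow_of_pos (by norm_num)]
      exact bot_le
    · have htd : t ≤ d := by
        rw [htdef, ← dist_eq_norm]
        exact Metric.dist_le_diam_of_mem hΩb hp1 hp2
      have hreal := pt_F hε0 hh hsum htpos htd (u p.1 - u p.2)
      rw [show ((N:ℝ) + 2*s) + 2*ε₀ = (N:ℝ) + 2*(s+ε₀) by ring] at hreal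
      have hFsq : F p ^ (2:ℝ) =
          ENNReal.ofReal ((|u p.1 - u p.2| * |Real.log t| / t ^ h) ^ 2) := by
        rw [hF, pt_sq (by positivity)]
      rw [hFsq]
      calc ENNReal.ofReal ((|u p.1 - u p.2| * |Real.log t| / t ^ h) ^ 2)
          ≤ ENNReal.ofReal (c ^ 2 * ((u p.1 - u p.2) ^ 2 / t ^ ((N:ℝ) + 2*(s+ε₀)) +
              d ^ (2 * ε₀) * ((u p.1 - u p.2) ^ 2 / t ^ ((N:ℝ) + 2*s)))) :=
            ENNReal.ofReal_le_ofReal hreal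
        _ = ENNReal.ofReal (c^2) * (f1 p + ENNReal.ofReal (d ^ (2*ε₀)) * f2 p) := by
            rw [ENNReal.ofReal_mul (by positivity), ENNReal.ofReal_add (by positivity)
              (by positivity), ENNReal.ofReal_mul (by positivity)]
  have stepF : ∫⁻ p, F p ^ (2:ℝ) ∂π ≤
      ENNReal.ofReal (c^2) * (gagliardo8 N Ω (s+ε₀) u +
        ENNReal.ofReal (d ^ (2*ε₀)) * gagliardo8 N Ω s u) := by
    calc ∫⁻ p, F p ^ (2:ℝ) ∂π
        ≤ ∫⁻ p, ENNReal.ofReal (c^2) * (f1 p + ENNReal.ofReal (d ^ (2*ε₀)) * f2 p) ∂π :=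
          lintegral_mono_ae haeF
      _ = ENNReal.ofReal (c^2) * ((∫⁻ p, f1 p ∂π) + ENNReal.ofReal (d ^ (2*ε₀)) *
            ∫⁻ p, f2 p ∂π) := by
          rw [lintegral_const_mul' _ _ ENNReal.ofReal_ne_top,
            lintegral_add_left mf1, lintegral_const_mul _ mf2]
      _ = ENNReal.ofReal (c^2) * (gagliardo8 N Ω (s+ε₀) u +
            ENNReal.ofReal (d ^ (2*ε₀)) * gagliardo8 N Ω s u) := by
          rw [lintegral_prod f1 mf1.aemeasurable, lintegral_prod f2 mf2.aemeasurable]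
          rfl
  -- assemble
  rw [hLHS]
  refine le_trans step1 (le_trans step2 ?_)
  have hsqrt : (ENNReal.ofReal (c^2) * (gagliardo8 N Ω (s+ε₀) u +
      ENNReal.ofReal (d ^ (2*ε₀)) * gagliardo8 N Ω s u)) ^ ((1:ℝ)/2) =
      ENNReal.ofReal c * (gagliardo8 N Ω (s+ε₀) u +
      ENNReal.ofReal (d ^ (2*ε₀)) * gagliardo8 N Ω s u) ^ ((1:ℝ)/2) := by
    rw [ENNReal.mul_rpow_of_nonneg _ _ (by norm_num : (0:ℝ) ≤ 1/2)]
    congr 1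
    rw [ENNReal.ofReal_rpow_of_nonneg (by positivity) (by norm_num)]
    congr 1
    rw [← Real.rpow_natCast c 2, ← Real.rpow_mul hc.le]
    norm_num
  calc (∫⁻ p, F p ^ (2:ℝ) ∂π) ^ ((1:ℝ)/2) * (∫⁻ p, G p ^ (2:ℝ) ∂π) ^ ((1:ℝ)/2)
      ≤ (ENNReal.ofReal (c^2) * (gagliardo8 N Ω (s+ε₀) u +
          ENNReal.ofReal (d ^ (2*ε₀)) * gagliardo8 N Ω s u)) ^ ((1:ℝ)/2) *
          (gagliardo8 N Ω s v) ^ ((1:ℝ)/2) := by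
        rw [stepG]
        exact mul_le_mul' (ENNReal.rpow_le_rpow stepF (by norm_num)) le_rfl
    _ = ENNReal.ofReal c * (gagliardo8 N Ω (s+ε₀) u +
          ENNReal.ofReal (d ^ (2*ε₀)) * gagliardo8 N Ω s u) ^ ((1:ℝ)/2) *
          (gagliardo8 N Ω s v) ^ ((1:ℝ)/2) := by rw [hsqrt]
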